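/- arXiv:1912.12448 — 2 statements merged into one kernel-verified Lean document; each statement's English description precedes it below -/
import Mathlib

section
/- Let A ∈ ℝ^{n×n}, C ∈ ℝ^{p×n}, let f : ℝⁿ → ℝⁿ be Lipschitz with constant β ≥ 0, and suppose there exist a symmetric positive definite P ∈ ℝ^{n×n}, Y ∈ ℝ^{n×p}, and κ > 0 such that the block matrix [[AᵀP + PA + κβ²I − YC − CᵀYᵀ, P], [P, −κI]] ⪯ 0. Let L = P⁻¹Y. Then for any solutions x(t), x̂(t) of ẋ = Ax + f(x) + Bu and the observer dynamics, the error e = x − x̂ satisfying ė = (A − LC)e − (f(x) − f(x̂)) admits V(e) = eᵀPe as a Lyapunov function: d/dt V(e(t)) ≤ 0 along trajectories. -/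
open Matrix

private lemma obs_adj {n m : ℕ} (M : Matrix (Fin n) (Fin m) ℝ) (u : Fin m → ℝ) (v : Fin n → ℝ) :
    (M *ᵥ u) ⬝ᵥ v = u ⬝ᵥ (Mᵀ *ᵥ v) := by
  rw [dotProduct_comm, dotProduct_mulVec, ← mulVec_transpose, dotProduct_comm]

private lemma obs_quad_eq {n p : ℕ} (A : Matrix (Fin n) (Fin n) ℝ) (C : Matrix (Fin p) (Fin n) ℝ)
    (P : Matrix (Fin n) (Fin n) ℝ) (Y : Matrix (Fin n) (Fin p) ℝ)
    (L : Matrix (Fin n) (Fin p) ℝ) (κ β : ℝ)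
    (hPL : P * L = Y) (hPsym : Pᵀ = P)
    (v w : Fin n → ℝ) :
    (((A - L * C) *ᵥ v - w) ⬝ᵥ (P *ᵥ v) + v ⬝ᵥ (P *ᵥ ((A - L * C) *ᵥ v - w)))
      = (Sum.elim v (-w)) ⬝ᵥ ((Matrix.fromBlocks
        (Aᵀ * P + P * A + (κ * β ^ 2) • (1 : Matrix (Fin n) (Fin n) ℝ)
          - Y * C - Cᵀ * Yᵀ) P P (-κ • (1 : Matrix (Fin n) (Fin n) ℝ))) *ᵥ (Sum.elim v (-w)))
        - κ * β ^ 2 * (v ⬝ᵥ v) + κ * (w ⬝ᵥ w) := by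
  have hY : Y * C = P * (L * C) := by rw [← hPL, Matrix.mul_assoc]
  have hYt : Cᵀ * Yᵀ = (L * C)ᵀ * P := by
    simp [← hPL, Matrix.transpose_mul, hPsym, Matrix.mul_assoc]
  rw [fromBlocks_mulVec, sumElim_dotProduct_sumElim, hY, hYt]
  simp only [sub_mulVec, add_mulVec, mulVec_add, mulVec_sub, dotProduct_add, dotProduct_sub,
    add_dotProduct, sub_dotProduct, neg_dotProduct, dotProduct_neg, mulVec_neg, neg_mulVec,
    smul_mulVec, one_mulVec, dotProduct_smul, smul_eq_mul, ← mulVec_mulVec,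
    obs_adj, transpose_transpose, transpose_mul, hPsym, smul_dotProduct,
    Sum.elim_comp_inl, Sum.elim_comp_inr]
  ring

/-- Lyapunov decrease for the Luenberger observer error dynamics of a
Lipschitz nonlinear system under the observer LMI. -/
theorem observer_lyapunov_decrease {n p m : ℕ}
    (A : Matrix (Fin n) (Fin n) ℝ) (B : Matrix (Fin n) (Fin m) ℝ)
    (C : Matrix (Fin p) (Fin n) ℝ)
    (f : (Fin n → ℝ) → (Fin n → ℝ)) (β : ℝ) (hβ : 0 ≤ β)
    (hlip : ∀ a b : Fin n → ℝ,
      Real.sqrt ((f a - f b) ⬝ᵥ (f a - f b)) ≤ β * Real.sqrt ((a - b) ⬝ᵥ (a - b)))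
    (P : Matrix (Fin n) (Fin n) ℝ) (Y : Matrix (Fin n) (Fin p) ℝ) (κ : ℝ)
    (hP : P.PosDef) (hκ : 0 < κ)
    (hLMI : (-(Matrix.fromBlocks
        (Aᵀ * P + P * A + (κ * β ^ 2) • (1 : Matrix (Fin n) (Fin n) ℝ)
          - Y * C - Cᵀ * Yᵀ) P P (-κ • (1 : Matrix (Fin n) (Fin n) ℝ)))).PosSemidef)
    (L : Matrix (Fin n) (Fin p) ℝ) (hL : L = P⁻¹ * Y)
    (x xh e : ℝ → (Fin n → ℝ)) (u : ℝ → (Fin m → ℝ))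
    (hx : ∀ t, HasDerivAt x (A *ᵥ x t + f (x t) + B *ᵥ u t) t)
    (he : ∀ t, e t = x t - xh t)
    (herr : ∀ t, HasDerivAt e ((A - L * C) *ᵥ e t - (f (x t) - f (xh t))) t) :
    ∀ t, deriv (fun s => e s ⬝ᵥ (P *ᵥ e s)) t ≤ 0 := by
  intro t
  set v := e t with hv
  set w := f (x t) - f (xh t) with hw
  set d := (A - L * C) *ᵥ v - w with hd
  -- derivative of the Lyapunov function
  have hderiv : HasDerivAt (fun s => e s ⬝ᵥ (P *ᵥ e s)) (d ⬝ᵥ (P *ᵥ v) + v ⬝ᵥ (P *ᵥ d)) t := by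
    have hi : ∀ i, HasDerivAt (fun s => e s i) (d i) t := hasDerivAt_pi.1 (herr t)
    have h : HasDerivAt (fun s => ∑ i, ∑ j, e s i * (P i j * e s j))
        (∑ i, ∑ j, (d i * (P i j * e t j) + e t i * (P i j * d j))) t := by
      apply HasDerivAt.fun_sum; intro i _
      apply HasDerivAt.fun_sum; intro j _
      exact (hi i).mul ((hi j).const_mul (P i j))
    convert h using 1
    · ext s; simp [dotProduct, mulVec, Finset.mul_sum]
    · simp [dotProduct, mulVec, Finset.mul_sum, Finset.sum_add_distrib]; rfl
  rw [hderiv.deriv]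
  -- matrix facts
  have hPsym : Pᵀ = P := by simpa using hP.isHermitian.eq
  have hPL : P * L = Y := by
    rw [hL, ← Matrix.mul_assoc, Matrix.mul_nonsing_inv _ hP.det_pos.ne'.isUnit, Matrix.one_mul]
  -- LMI quadratic bound
  have hz := hLMI.dotProduct_mulVec_nonneg (Sum.elim v (-w))
  rw [neg_mulVec, dotProduct_neg] at hz
  have hzle : (Sum.elim v (-w)) ⬝ᵥ ((Matrix.fromBlocks
      (Aᵀ * P + P * A + (κ * β ^ 2) • (1 : Matrix (Fin n) (Fin n) ℝ)
        - Y * C - Cᵀ * Yᵀ) P P (-κ • (1 : Matrix (Fin n) (Fin n) ℝ))) *ᵥ (Sum.elim v (-w))) ≤ 0 := by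
    simpa using neg_nonneg.1 (by simpa using hz)
  -- Lipschitz bound squared
  have hvw : w ⬝ᵥ w ≤ β ^ 2 * (v ⬝ᵥ v) := by
    have h1 : (0:ℝ) ≤ w ⬝ᵥ w := by
      apply Finset.sum_nonneg; intro i _; exact mul_self_nonneg _
    have h2 : (0:ℝ) ≤ v ⬝ᵥ v := by
      apply Finset.sum_nonneg; intro i _; exact mul_self_nonneg _
    have hl := hlip (x t) (xh t)
    rw [← he t, ← hv, ← hw] at hl
    calc w ⬝ᵥ w = Real.sqrt (w ⬝ᵥ w) ^ 2 := (Real.sq_sqrt h1).symm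
      _ ≤ (β * Real.sqrt (v ⬝ᵥ v)) ^ 2 := by
          apply pow_le_pow_left₀ (Real.sqrt_nonneg _) hl
      _ = β ^ 2 * (v ⬝ᵥ v) := by
          rw [mul_pow, Real.sq_sqrt h2]
  rw [obs_quad_eq A C P Y L κ β hPL hPsym v w]
  nlinarith [hzle, hvw, hκ.le]
end

section
/- For matrices Y, Q ∈ ℝ^{m×p}, entrywise bounds Y̲ ≤ Y ≤ Ȳ, and γ ∈ {0,1}^p with Γ = diag(γ): the constraint Q = YΓ holds if and only if for every i, j the four inequalities Q_{ij} ≥ Y_{ij} + Ȳ_{ij}(γⱼ − 1), Ȳ_{ij}γⱼ ≥ Q_{ij}, −Q_{ij} ≥ −Y_{ij} + Y̲_{ij}(1 − γⱼ), and Q_{ij} ≥ Y̲_{ij}γⱼ hold. -/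
open Matrix

/-- Matrix version of the McCormick exactness: Q = YΓ with Γ = diag(γ),
γ binary, and Y entrywise bounded, iff the entrywise McCormick
inequalities hold. -/
theorem mccormick_matrix_exact {m p : ℕ}
    (Y Q Ylow Ybar : Matrix (Fin m) (Fin p) ℝ) (γ : Fin p → ℝ)
    (hYbounds : ∀ i j, Ylow i j ≤ Y i j ∧ Y i j ≤ Ybar i j)
    (hγ : ∀ j, γ j = 0 ∨ γ j = 1) :
    Q = Y * Matrix.diagonal γ ↔
      ∀ i j, Q i j ≥ Y i j + Ybar i j * (γ j - 1) ∧
             Ybar i j * γ j ≥ Q i j ∧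
             -Q i j ≥ -Y i j + Ylow i j * (1 - γ j) ∧
             Q i j ≥ Ylow i j * γ j := by
  have key : ∀ i j, (Y * Matrix.diagonal γ) i j = Y i j * γ j := by
    intro i j
    simp [Matrix.mul_apply, Matrix.diagonal, Finset.sum_eq_single j]
  constructor
  · intro h i j
    have hq : Q i j = Y i j * γ j := by rw [h]; exact key i j
    obtain ⟨h1, h2⟩ := hYbounds i j
    rcases hγ j with h0 | h0 <;> rw [hq, h0] <;>
      refine ⟨by nlinarith, by nlinarith, by nlinarith, by nlinarith⟩
  · intro h
    ext i j
    rw [key i j]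
    obtain ⟨h1, h2, h3, h4⟩ := h i j
    rcases hγ j with h0 | h0 <;> rw [h0] at h1 h2 h3 h4 ⊢ <;> nlinarith
end
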